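/- Let m ≥ 2 and let P_m denote the path graph on m vertices. A set S ⊆ V(P_m) is an MEG-set of P_m if and only if S contains both endpoints of the path. Consequently meg(P_m) = 2, and P_m has a unique minimal MEG-set, namely the set of its two endpoints. -/

import Mathlib

open SimpleGraph

/-- `S` is a monitoring edge-geodetic set (MEG-set) of `G`: for every edge `e` of `G`
there are `x, y ∈ S` whose distance in `G − e` differs from their distance in `G`
(including the case that they become disconnected in `G − e`). -/
def IsMEGSet {V : Type*} (G : SimpleGraph V) (S : Set V) : Prop :=
  ∀ e ∈ G.edgeSet, ∃ x ∈ S, ∃ y ∈ S,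
    ¬ (G.deleteEdges {e}).Reachable x y ∨ (G.deleteEdges {e}).dist x y ≠ G.dist x y

/-- The monitoring edge-geodetic number: the minimum cardinality of an MEG-set. -/
noncomputable def meg {V : Type*} [Fintype V] (G : SimpleGraph V) : ℕ :=
  sInf {n | ∃ S : Set V, IsMEGSet G S ∧ S.ncard = n}

/-- The strong product `G ⊠ H` of two simple graphs: `(a,b)` adjacent to `(c,d)` iff
`a = c` and `bd ∈ E(H)`, or `b = d` and `ac ∈ E(G)`, or `ac ∈ E(G)` and `bd ∈ E(H)`. -/
def strongProd {α β : Type*} (G : SimpleGraph α) (H : SimpleGraph β) :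
    SimpleGraph (α × β) where
  Adj x y := (x.1 = y.1 ∧ H.Adj x.2 y.2) ∨ (x.2 = y.2 ∧ G.Adj x.1 y.1) ∨
    (G.Adj x.1 y.1 ∧ H.Adj x.2 y.2)
  symm.symm x y := by
    rintro (⟨h1, h2⟩ | ⟨h1, h2⟩ | ⟨h1, h2⟩)
    · exact Or.inl ⟨h1.symm, h2.symm⟩
    · exact Or.inr (Or.inl ⟨h1.symm, h2.symm⟩)
    · exact Or.inr (Or.inr ⟨h1.symm, h2.symm⟩)
  loopless.irrefl x := by
    rintro (⟨_, h⟩ | ⟨_, h⟩ | ⟨h, _⟩)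
    · exact H.loopless.irrefl _ h
    · exact G.loopless.irrefl _ h
    · exact G.loopless.irrefl _ h

infixl:70 " ⊠ " => strongProd


private lemma megAux_walk_bound {m : ℕ} {x y : Fin m} (w : (pathGraph m).Walk x y) :
    y.val - x.val ≤ w.length ∧ x.val - y.val ≤ w.length := by
  induction w with
  | nil => simp
  | cons h p ih =>
    rw [pathGraph_adj] at h
    simp only [Walk.length_cons]
    omega

private lemma megAux_chain {m : ℕ} (H : SimpleGraph (Fin m)) :
    ∀ (d a : ℕ) (h : a + d < m),
    (∀ k (hk1 : a ≤ k) (hk2 : k < a + d), H.Adj ⟨k, by omega⟩ ⟨k+1, by omega⟩) →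
    ∃ w : H.Walk ⟨a, by omega⟩ ⟨a + d, h⟩, w.length = d := by
  intro d
  induction d with
  | zero => intro a h _; exact ⟨Walk.nil, rfl⟩
  | succ d ih =>
    intro a h hadj
    obtain ⟨w, hw⟩ := ih (a+1) (by omega) (fun k hk1 hk2 => hadj k (by omega) (by omega))
    refine ⟨(Walk.cons (hadj a le_rfl (by omega)) w).copy rfl (Fin.ext (show a+1+d = a+(d+1) by omega)), ?_⟩
    simp [hw]

private lemma megAux_sep {m i : ℕ} (hi : i + 1 < m) :
    ∀ {x y : Fin m},
      ((pathGraph m).deleteEdges {s((⟨i, by omega⟩ : Fin m), ⟨i+1, hi⟩)}).Walk x y →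
      x.val ≤ i → y.val ≤ i := by
  intro x y w
  induction w with
  | nil => exact id
  | @cons x u y h p ih =>
    intro hx
    apply ih
    rw [deleteEdges_adj] at h
    obtain ⟨hadj, hne⟩ := h
    rw [pathGraph_adj] at hadj
    by_contra hgt
    have hu : u.val = i + 1 := by omega
    have hx' : x.val = i := by omega
    exact hne (by
      simp only [Set.mem_singleton_iff, Sym2.eq_iff]
      exact Or.inl ⟨Fin.ext hx', Fin.ext hu⟩)

private lemma megAux_side_ord {m i : ℕ} (hi : i + 1 < m) {x y : Fin m}
    (hxy : x.val ≤ y.val)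
    (hs : (x.val ≤ i ∧ y.val ≤ i) ∨ (i + 1 ≤ x.val ∧ i + 1 ≤ y.val)) :
    ((pathGraph m).deleteEdges {s((⟨i, by omega⟩ : Fin m), ⟨i+1, hi⟩)}).Reachable x y ∧
    ((pathGraph m).deleteEdges {s((⟨i, by omega⟩ : Fin m), ⟨i+1, hi⟩)}).dist x y =
      (pathGraph m).dist x y := by
  set G' := (pathGraph m).deleteEdges {s((⟨i, by omega⟩ : Fin m), ⟨i+1, hi⟩)} with hG'
  obtain ⟨w, hw⟩ := megAux_chain G' (y.val - x.val) x.val (by omega) (by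
    intro k hk1 hk2
    rw [hG', deleteEdges_adj]
    constructor
    · rw [pathGraph_adj]; left; rfl
    · simp only [Set.mem_singleton_iff, Sym2.eq_iff, Fin.mk.injEq]
      omega)
  let w' : G'.Walk x y := w.copy (Fin.ext rfl : (⟨x.val, x.isLt⟩ : Fin m) = x)
    (Fin.ext (show x.val + (y.val - x.val) = y.val by omega))
  have hw' : w'.length = y.val - x.val := by
    simp only [w', Walk.length_copy]; exact hw
  have hreach : G'.Reachable x y := ⟨w'⟩
  refine ⟨hreach, ?_⟩
  have h1 : G'.dist x y ≤ y.val - x.val := hw' ▸ dist_le w'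
  obtain ⟨p, hp⟩ := hreach.exists_walk_length_eq_dist
  have h2 : (pathGraph m).dist x y ≤ G'.dist x y := by
    have := dist_le (p.mapLe (deleteEdges_le _))
    rwa [Walk.mapLe, Walk.length_map, hp] at this
  have hreachG : (pathGraph m).Reachable x y := hreach.mono (deleteEdges_le _)
  obtain ⟨q, hq⟩ := hreachG.exists_walk_length_eq_dist
  have h3 : y.val - x.val ≤ (pathGraph m).dist x y := hq ▸ (megAux_walk_bound q).1
  omega

private lemma megAux_side {m i : ℕ} (hi : i + 1 < m) {x y : Fin m}
    (hs : (x.val ≤ i ∧ y.val ≤ i) ∨ (i + 1 ≤ x.val ∧ i + 1 ≤ y.val)) :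
    ((pathGraph m).deleteEdges {s((⟨i, by omega⟩ : Fin m), ⟨i+1, hi⟩)}).Reachable x y ∧
    ((pathGraph m).deleteEdges {s((⟨i, by omega⟩ : Fin m), ⟨i+1, hi⟩)}).dist x y =
      (pathGraph m).dist x y := by
  rcases le_total x.val y.val with h | h
  · exact megAux_side_ord hi h hs
  · obtain ⟨r, hd⟩ := megAux_side_ord hi h (by tauto)
    exact ⟨r.symm, (SimpleGraph.dist_comm).trans (hd.trans SimpleGraph.dist_comm)⟩

theorem pathGraph_megSets (m : ℕ) (hm : 2 ≤ m) :
    (∀ S : Set (Fin m), IsMEGSet (pathGraph m) S ↔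
      (⟨0, by omega⟩ : Fin m) ∈ S ∧ (⟨m - 1, by omega⟩ : Fin m) ∈ S) ∧
    meg (pathGraph m) = 2 ∧
    (IsMEGSet (pathGraph m)
        ({⟨0, by omega⟩, ⟨m - 1, by omega⟩} : Set (Fin m)) ∧
      ∀ R : Set (Fin m), IsMEGSet (pathGraph m) R →
        ({⟨0, by omega⟩, ⟨m - 1, by omega⟩} : Set (Fin m)) ⊆ R) := by
  have h0m : (0:ℕ) < m := by omega
  have h1m : (1:ℕ) < m := by omega
  set v0 : Fin m := ⟨0, h0m⟩ with hv0
  set vl : Fin m := ⟨m - 1, by omega⟩ with hvl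
  -- backward direction: containing both endpoints implies MEG
  have hback : ∀ S : Set (Fin m), v0 ∈ S → vl ∈ S → IsMEGSet (pathGraph m) S := by
    intro S h0 hl e he
    refine ⟨v0, h0, vl, hl, Or.inl ?_⟩
    induction e with
    | h a b =>
      rw [mem_edgeSet, pathGraph_adj] at he
      rcases he with hab | hab
      · -- i := a.val
        have hi : a.val + 1 < m := by omega
        have hedge : s(a, b) = s((⟨a.val, by omega⟩ : Fin m), ⟨a.val+1, hi⟩) := by
          rw [Sym2.eq_iff]; exact Or.inl ⟨Fin.ext rfl, Fin.ext hab.symm⟩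
        rw [hedge]
        rintro ⟨w⟩
        have := megAux_sep hi w (by simp [hv0])
        simp only [hvl] at this
        omega
      · have hi : b.val + 1 < m := by omega
        have hedge : s(a, b) = s((⟨b.val, by omega⟩ : Fin m), ⟨b.val+1, hi⟩) := by
          rw [Sym2.eq_iff]; exact Or.inr ⟨Fin.ext hab.symm, Fin.ext rfl⟩
        rw [hedge]
        rintro ⟨w⟩
        have := megAux_sep hi w (by simp [hv0])
        simp only [hvl] at this
        omega
  -- forward direction
  have hfwd : ∀ S : Set (Fin m), IsMEGSet (pathGraph m) S → v0 ∈ S ∧ vl ∈ S := by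
    intro S hS
    constructor
    · -- edge {0,1}
      have hi : (0:ℕ) + 1 < m := by omega
      obtain ⟨x, hx, y, hy, hdet⟩ := hS (s((⟨0, by omega⟩ : Fin m), ⟨0+1, hi⟩))
        (by rw [mem_edgeSet, pathGraph_adj]; left; rfl)
      by_cases hx0 : x.val = 0
      · rwa [show v0 = x from Fin.ext hx0.symm]
      by_cases hy0 : y.val = 0
      · rwa [show v0 = y from Fin.ext hy0.symm]
      exfalso
      obtain ⟨hr, hd⟩ := megAux_side (x := x) (y := y) hi (Or.inr ⟨by omega, by omega⟩)
      rcases hdet with h | h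
      · exact h hr
      · exact h hd
    · -- edge {m-2, m-1}
      have hi : (m - 2) + 1 < m := by omega
      obtain ⟨x, hx, y, hy, hdet⟩ := hS (s((⟨m - 2, by omega⟩ : Fin m), ⟨(m-2)+1, hi⟩))
        (by rw [mem_edgeSet, pathGraph_adj]; left; rfl)
      by_cases hx0 : x.val = m - 1
      · rwa [show vl = x from Fin.ext hx0.symm]
      by_cases hy0 : y.val = m - 1
      · rwa [show vl = y from Fin.ext hy0.symm]
      exfalso
      have hxlt := x.isLt
      have hylt := y.isLt
      obtain ⟨hr, hd⟩ := megAux_side (x := x) (y := y) hi (Or.inl ⟨by omega, by omega⟩)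
      rcases hdet with h | h
      · exact h hr
      · exact h hd
  have hiff : ∀ S : Set (Fin m), IsMEGSet (pathGraph m) S ↔ v0 ∈ S ∧ vl ∈ S :=
    fun S => ⟨hfwd S, fun ⟨h0, hl⟩ => hback S h0 hl⟩
  have hne : v0 ≠ vl := by
    intro h
    have := congrArg Fin.val h
    simp [hv0, hvl] at this
    omega
  refine ⟨hiff, ?_, ?_⟩
  · -- meg = 2
    have hmem : 2 ∈ {n | ∃ S : Set (Fin m), IsMEGSet (pathGraph m) S ∧ S.ncard = n} := by
      refine ⟨{v0, vl}, hback _ (by simp) (by simp), Set.ncard_pair hne⟩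
    refine le_antisymm (Nat.sInf_le hmem) (le_csInf ⟨2, hmem⟩ ?_)
    rintro n ⟨S, hS, rfl⟩
    obtain ⟨h0, hl⟩ := hfwd S hS
    calc 2 = ({v0, vl} : Set (Fin m)).ncard := (Set.ncard_pair hne).symm
      _ ≤ S.ncard := Set.ncard_le_ncard (by
          intro z hz; rcases hz with rfl | rfl
          · exact h0
          · exact hl) S.toFinite
  · refine ⟨hback _ (by simp) (by simp), ?_⟩
    intro R hR
    obtain ⟨h0, hl⟩ := hfwd R hR
    intro z hz
    rcases hz with rfl | rfl
    · exact h0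
    · exact hl
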